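/- The Lie algebra generated (under commutators and real linear combinations) by the set of d×d Hermitian matrices of the form Σ_m β_m |m⟩⟨m| + Σ_m C_m(|m⟩⟨m+1| + |m+1⟩⟨m|) with arbitrary real β_m, C_m, multiplied by i, is the full unitary Lie algebra u(d). -/

import Mathlib

open Matrix

attribute [local instance 100] LieRing.ofAssociativeRing

/-- The tridiagonal Hermitian matrix with real diagonal `β` and real couplings `C`. -/
def triHam (d : ℕ) (β C : Fin d → ℝ) : Matrix (Fin d) (Fin d) ℂ :=
  fun i j =>
    if i = j then (β i : ℂ)
    else if (i : ℕ) + 1 = (j : ℕ) then (C i : ℂ)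
    else if (j : ℕ) + 1 = (i : ℕ) then (C j : ℂ)
    else 0

namespace TriGen

variable {d : ℕ}

/-- matrix unit -/
noncomputable abbrev E (j k : Fin d) : Matrix (Fin d) (Fin d) ℂ := Matrix.single j k 1

/-- the generated Lie algebra -/
noncomputable def L (d : ℕ) : LieSubalgebra ℝ (Matrix (Fin d) (Fin d) ℂ) :=
  LieSubalgebra.lieSpan ℝ _ {A | ∃ β C : Fin d → ℝ, A = Complex.I • triHam d β C}

lemma mem_gen (β C : Fin d → ℝ) : Complex.I • triHam d β C ∈ L d :=
  LieSubalgebra.subset_lieSpan ⟨β, C, rfl⟩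

lemma diag_eq (m : Fin d) :
    triHam d (fun x => if x = m then 1 else 0) 0 = E m m := by
  ext i j
  simp only [triHam, Matrix.single, of_apply, Pi.zero_apply, Complex.ofReal_zero]
  split_ifs <;> first | (exfalso; omega) | norm_num | omega

lemma mem_diag (m : Fin d) : Complex.I • E m m ∈ L d := by
  have := mem_gen (d := d) (fun x => if x = m then 1 else 0) 0
  rwa [diag_eq] at this

lemma offdiag_eq (j k : Fin d) (h : (j : ℕ) + 1 = (k : ℕ)) :
    triHam d 0 (fun x => if x = j then 1 else 0) = E j k + E k j := by
  ext p q
  simp only [triHam, Matrix.single, of_apply, Pi.zero_apply, Complex.ofReal_zero, Matrix.add_apply]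
  split_ifs <;> first | (exfalso; omega) | norm_num | omega

lemma mem_S_adj (j k : Fin d) (h : (j : ℕ) + 1 = (k : ℕ)) :
    Complex.I • (E j k + E k j) ∈ L d := by
  have := mem_gen (d := d) 0 (fun x => if x = j then 1 else 0)
  rwa [offdiag_eq j k h] at this

lemma A_of_S (j k : Fin d) (h : j ≠ k)
    (hS : Complex.I • (E j k + E k j) ∈ L d) : E j k - E k j ∈ L d := by
  have hb := (L d).lie_mem (mem_diag j) hS
  have key : ⁅Complex.I • E j j, Complex.I • (E j k + E k j)⁆ = -(E j k - E k j) := by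
    rw [Ring.lie_def]
    simp only [smul_mul_assoc, mul_smul_comm, mul_add, add_mul, smul_smul, Complex.I_mul_I,
      single_mul_single_same, one_mul,
      single_mul_single_of_ne (1 : ℂ) _ _ _ h (1 : ℂ), single_mul_single_of_ne (1 : ℂ) _ _ _ h.symm (1 : ℂ)]
    match_scalars <;> simp [Complex.I_sq] <;> ring
  rw [key] at hb
  simpa using (L d).neg_mem hb

lemma S_step (j k' k : Fin d) (h1 : j ≠ k') (h2 : j ≠ k) (h3 : k' ≠ k)
    (hA : E j k' - E k' j ∈ L d) (hS : Complex.I • (E k' k + E k k') ∈ L d) :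
    Complex.I • (E j k + E k j) ∈ L d := by
  have hb := (L d).lie_mem hA hS
  have key : ⁅E j k' - E k' j, Complex.I • (E k' k + E k k')⁆
      = Complex.I • (E j k + E k j) := by
    rw [Ring.lie_def]
    simp only [mul_smul_comm, smul_mul_assoc, sub_mul, mul_sub, mul_add, add_mul,
      single_mul_single_same, one_mul,
      single_mul_single_of_ne (1 : ℂ) _ _ _ h3 (1 : ℂ),
      single_mul_single_of_ne (1 : ℂ) _ _ _ h3.symm (1 : ℂ),
      single_mul_single_of_ne (1 : ℂ) _ _ _ h1 (1 : ℂ),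
      single_mul_single_of_ne (1 : ℂ) _ _ _ h1.symm (1 : ℂ),
      single_mul_single_of_ne (1 : ℂ) _ _ _ h2 (1 : ℂ),
      single_mul_single_of_ne (1 : ℂ) _ _ _ h2.symm (1 : ℂ)]
    match_scalars <;> simp [Complex.I_sq] <;> ring
  rw [key] at hb
  exact hb

lemma S_lt (j k : Fin d) (h : (j : ℕ) < (k : ℕ)) :
    Complex.I • (E j k + E k j) ∈ L d := by
  obtain ⟨n, hn⟩ : ∃ n, (j : ℕ) + 1 + n = (k : ℕ) := ⟨(k : ℕ) - ((j : ℕ) + 1), by omega⟩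
  induction n generalizing k with
  | zero => exact mem_S_adj j k (by omega)
  | succ n ih =>
    have hk1 : (k : ℕ) - 1 < d := by omega
    set k' : Fin d := ⟨(k : ℕ) - 1, hk1⟩ with hk'
    have hvk' : (k' : ℕ) = (k : ℕ) - 1 := rfl
    have hS' : Complex.I • (E j k' + E k' j) ∈ L d := ih k' (by omega) (by omega)
    have hA' : E j k' - E k' j ∈ L d :=
      A_of_S j k' (by omega) hS'
    exact S_step j k' k (by omega) (by omega) (by omega)
      hA' (mem_S_adj k' k (by omega))

lemma S_all (j k : Fin d) : Complex.I • (E j k + E k j) ∈ L d := by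
  rcases lt_trichotomy (j : ℕ) (k : ℕ) with h | h | h
  · exact S_lt j k h
  · have : j = k := Fin.ext h
    subst this
    have h2 : Complex.I • (E j j + E j j) = (2 : ℝ) • (Complex.I • E j j) := by
      rw [two_smul, smul_add]
    rw [h2]
    exact (L d).smul_mem _ (mem_diag j)
  · have := S_lt k j h
    rwa [add_comm] at this

lemma A_all (j k : Fin d) : E j k - E k j ∈ L d := by
  rcases eq_or_ne j k with rfl | h
  · simpa using (L d).zero_mem
  · exact A_of_S j k h (S_all j k)

end TriGen

open TriGen in
/-- **Controllability: the tridiagonal Hamiltonians generate u(d).**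
The real Lie algebra generated by the matrices `i H` with `H` tridiagonal Hermitian
(arbitrary real diagonal and couplings) is the full Lie algebra `u(d)` of
skew-Hermitian matrices. -/
theorem tridiagonal_generates_u_d (d : ℕ) (hd : 2 ≤ d) :
    (LieSubalgebra.lieSpan ℝ (Matrix (Fin d) (Fin d) ℂ)
        {A | ∃ β C : Fin d → ℝ, A = Complex.I • triHam d β C} : Set (Matrix (Fin d) (Fin d) ℂ)) =
      {A : Matrix (Fin d) (Fin d) ℂ | Aᴴ = -A} := by
  apply le_antisymm
  · -- lieSpan ⊆ skew-Hermitian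
    have hK : ∃ K : LieSubalgebra ℝ (Matrix (Fin d) (Fin d) ℂ),
        (K : Set (Matrix (Fin d) (Fin d) ℂ)) = {A | Aᴴ = -A} := by
      refine ⟨{ carrier := {A | Aᴴ = -A}
                add_mem' := ?_
                zero_mem' := by simp
                smul_mem' := ?_
                lie_mem' := ?_ }, rfl⟩
      · intro a b ha hb
        simp only [Set.mem_setOf_eq] at *
        rw [conjTranspose_add, ha, hb, neg_add]
      · intro c a ha
        simp only [Set.mem_setOf_eq] at *
        rw [conjTranspose_smul, ha, star_trivial, smul_neg]
      · intro a b ha hb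
        simp only [Set.mem_setOf_eq] at *
        rw [Ring.lie_def, conjTranspose_sub, conjTranspose_mul, conjTranspose_mul, ha, hb]
        simp only [neg_mul_neg, neg_sub]
    obtain ⟨K, hKeq⟩ := hK
    have hle : LieSubalgebra.lieSpan ℝ (Matrix (Fin d) (Fin d) ℂ)
        {A | ∃ β C : Fin d → ℝ, A = Complex.I • triHam d β C} ≤ K := by
      apply LieSubalgebra.lieSpan_le.mpr
      rintro A ⟨β, C, rfl⟩
      have hH : (triHam d β C)ᴴ = triHam d β C := by
        ext i j
        simp only [conjTranspose_apply, triHam]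
        split_ifs <;>
          first
          | (exfalso; omega)
          | (subst_vars; simp [Complex.conj_ofReal])
          | simp [Complex.conj_ofReal]
      have hsk : (Complex.I • triHam d β C)ᴴ = -(Complex.I • triHam d β C) := by
        rw [conjTranspose_smul, hH, Complex.star_def, Complex.conj_I, neg_smul]
      show _ ∈ (K : Set (Matrix (Fin d) (Fin d) ℂ))
      rw [hKeq]
      exact hsk
    intro x hx
    rw [← hKeq]
    exact hle hx
  · -- skew-Hermitian ⊆ lieSpan
    intro M hM
    simp only [Set.mem_setOf_eq] at hM
    have hpt : ∀ p q : Fin d, (starRingEnd ℂ) (M q p) = -(M p q) := by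
      intro p q
      have := congrFun (congrFun hM p) q
      simpa [conjTranspose_apply, Complex.star_def] using this
    show M ∈ L d
    have hdecomp : M = ∑ j : Fin d, ∑ k : Fin d,
        (((M j k).re / 2) • (E j k - E k j) +
          ((M j k).im / 2) • (Complex.I • (E j k + E k j))) := by
      have step1 : ∀ j k : Fin d,
          ((M j k).re / 2) • (E j k - E k j) +
            ((M j k).im / 2) • (Complex.I • (E j k + E k j))
          = Matrix.single j k ((((M j k).re / 2 : ℝ) : ℂ) + Complex.I * ((M j k).im / 2 : ℝ))
            + Matrix.single k j ((-((M j k).re / 2 : ℝ) : ℂ) + Complex.I * ((M j k).im / 2 : ℝ)) := by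
        intro j k
        ext p q
        simp only [Matrix.add_apply, Matrix.sub_apply, Matrix.smul_apply, Matrix.single, of_apply,
          Complex.real_smul, smul_eq_mul]
        split_ifs <;> push_cast <;> ring
      rw [Finset.sum_congr rfl fun j _ => Finset.sum_congr rfl fun k _ => step1 j k]
      have step2 : (∑ j : Fin d, ∑ k : Fin d,
          (Matrix.single j k ((((M j k).re / 2 : ℝ) : ℂ) + Complex.I * ((M j k).im / 2 : ℝ))
            + Matrix.single k j ((-((M j k).re / 2 : ℝ) : ℂ) + Complex.I * ((M j k).im / 2 : ℝ))))
          = (∑ j : Fin d, ∑ k : Fin d,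
              Matrix.single j k ((((M j k).re / 2 : ℝ) : ℂ) + Complex.I * ((M j k).im / 2 : ℝ)))
            + ∑ j : Fin d, ∑ k : Fin d,
              Matrix.single k j ((-((M j k).re / 2 : ℝ) : ℂ) + Complex.I * ((M j k).im / 2 : ℝ)) := by
        rw [← Finset.sum_add_distrib]
        exact Finset.sum_congr rfl fun j _ => Finset.sum_add_distrib
      rw [step2]
      have step3 : (∑ j : Fin d, ∑ k : Fin d,
          Matrix.single k j ((-((M j k).re / 2 : ℝ) : ℂ) + Complex.I * ((M j k).im / 2 : ℝ)))
          = ∑ j : Fin d, ∑ k : Fin d,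
              Matrix.single j k ((-((M k j).re / 2 : ℝ) : ℂ) + Complex.I * ((M k j).im / 2 : ℝ)) :=
        Finset.sum_comm
      rw [step3, ← Finset.sum_add_distrib]
      have step4 : ∀ j k : Fin d,
          (Matrix.single j k ((((M j k).re / 2 : ℝ) : ℂ) + Complex.I * ((M j k).im / 2 : ℝ))
            + Matrix.single j k ((-((M k j).re / 2 : ℝ) : ℂ) + Complex.I * ((M k j).im / 2 : ℝ)))
          = Matrix.single j k (M j k) := by
        intro j k
        rw [← Matrix.single_add]
        refine congrArg _ ?_
        have h1 := hpt j k
        have hre : (M k j).re = -(M j k).re := by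
          have := congrArg Complex.re h1
          simpa using this
        have him : (M k j).im = (M j k).im := by
          have := congrArg Complex.im h1
          simpa using this
        rw [hre, him]
        apply Complex.ext <;> simp <;> ring
      have step5 : ∀ j : Fin d,
          ((∑ k : Fin d, Matrix.single j k ((((M j k).re / 2 : ℝ) : ℂ) + Complex.I * ((M j k).im / 2 : ℝ)))
            + ∑ k : Fin d, Matrix.single j k ((-((M k j).re / 2 : ℝ) : ℂ) + Complex.I * ((M k j).im / 2 : ℝ)))
          = ∑ k : Fin d, Matrix.single j k (M j k) := by
        intro j
        rw [← Finset.sum_add_distrib]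
        exact Finset.sum_congr rfl fun k _ => step4 j k
      rw [Finset.sum_congr rfl fun j _ => step5 j]
      exact matrix_eq_sum_single M
    rw [hdecomp]
    rw [← LieSubalgebra.mem_toSubmodule]
    apply Submodule.sum_mem
    intro j _
    apply Submodule.sum_mem
    intro k _
    rw [LieSubalgebra.mem_toSubmodule]
    exact (L d).add_mem ((L d).smul_mem _ (A_all j k))
      ((L d).smul_mem _ (S_all j k))
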